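/- Let K be a finite abstract simplicial complex and f₀ an injective real-valued function on the vertices of K. If σ ∈ K is a left-right parent, then its rightmost face r(σ) is not itself a left-right parent. -/

import Mathlib

open Finset

attribute [local instance] Classical.propDecidable

/-- A finite abstract simplicial complex: a finite family of nonempty finite sets
(simplices) closed under taking nonempty subsets. -/
def IsComplex {V : Type*} [DecidableEq V] (K : Finset (Finset V)) : Prop :=
  (∀ σ ∈ K, σ.Nonempty) ∧ ∀ σ ∈ K, ∀ τ : Finset V, τ ⊆ σ → τ.Nonempty → τ ∈ K

/-- A discrete Morse function: for every simplex `σ ∈ K`, at most one coface `β ⊋ σ`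
has `f β ≤ f σ`, and at most one face `γ ⊊ σ` has `f γ ≥ f σ`. -/
def IsDMF {V : Type*} [DecidableEq V] (K : Finset (Finset V)) (f : Finset V → ℝ) : Prop :=
  ∀ σ ∈ K,
    (K.filter fun β => σ ⊂ β ∧ f β ≤ f σ).card ≤ 1 ∧
    (K.filter fun γ => γ ⊂ σ ∧ f σ ≤ f γ).card ≤ 1

/-- A simplex is critical if both counts in the Morse condition are zero. -/
def IsCritical {V : Type*} [DecidableEq V] (K : Finset (Finset V)) (f : Finset V → ℝ)
    (σ : Finset V) : Prop :=
  (K.filter fun β => σ ⊂ β ∧ f β ≤ f σ).card = 0 ∧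
  (K.filter fun γ => γ ⊂ σ ∧ f σ ≤ f γ).card = 0

/-- The decreasing list of `f0`-values of the vertices of a simplex. -/
noncomputable def descList {V : Type*} [DecidableEq V] (f0 : V → ℝ) (σ : Finset V) :
    List ℝ :=
  ((σ.image f0).sort (· ≤ ·)).reverse

/-- Lexicographic comparison of simplices: compare the decreasing sequences of
`f0`-values of their vertices lexicographically. -/
noncomputable def lexLt {V : Type*} [DecidableEq V] (f0 : V → ℝ) (σ τ : Finset V) : Prop :=
  List.Lex (· < ·) (descList f0 σ) (descList f0 τ)

/-- `τ` is the rightmost face of `σ`: the codimension-one face of `σ` of maximum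
lexicographic value. -/
noncomputable def IsRChild {V : Type*} [DecidableEq V] (K : Finset (Finset V)) (f0 : V → ℝ)
    (σ τ : Finset V) : Prop :=
  τ ∈ K ∧ τ ⊂ σ ∧ τ.card + 1 = σ.card ∧
    ∀ τ' ∈ K, τ' ⊂ σ → τ'.card + 1 = σ.card → τ' = τ ∨ lexLt f0 τ' τ

/-- `σ` is the leftmost coface of `τ`: the codimension-one coface of `τ` of minimum
lexicographic value. -/
noncomputable def IsLParent {V : Type*} [DecidableEq V] (K : Finset (Finset V)) (f0 : V → ℝ)
    (τ σ : Finset V) : Prop :=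
  σ ∈ K ∧ τ ⊂ σ ∧ τ.card + 1 = σ.card ∧
    ∀ σ' ∈ K, τ ⊂ σ' → τ.card + 1 = σ'.card → σ' = σ ∨ lexLt f0 σ σ'

/-- The rightmost face of `σ` (an arbitrary default if none exists). -/
noncomputable def rchild {V : Type*} [DecidableEq V] (K : Finset (Finset V)) (f0 : V → ℝ)
    (σ : Finset V) : Finset V :=
  if h : ∃ τ, IsRChild K f0 σ τ then h.choose else ∅

/-- `σ` is a left-right parent: the leftmost coface of its rightmost face is `σ` itself,
i.e. `ℓ(r(σ)) = σ`. -/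
noncomputable def LeftRightParent {V : Type*} [DecidableEq V] (K : Finset (Finset V))
    (f0 : V → ℝ) (σ : Finset V) : Prop :=
  (∃ τ, IsRChild K f0 σ τ) ∧ IsLParent K f0 (rchild K f0 σ) σ

/-- The maximum `f0`-value over the vertices of a simplex. -/
noncomputable def maxVal {V : Type*} [DecidableEq V] (f0 : V → ℝ) (σ : Finset V) : ℝ :=
  if h : σ.Nonempty then σ.sup' h f0 else 0

private lemma lex_asymm : ∀ {l1 l2 : List ℝ}, List.Lex (· < ·) l1 l2 → ¬ List.Lex (· < ·) l2 l1 := by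
  intro l1 l2 h
  induction h with
  | nil => intro h'; cases h'
  | cons _ ih => intro h'; cases h' with
    | cons h'' => exact ih h''
    | rel hr => exact lt_irrefl _ hr
  | rel hr => intro h'; cases h' with
    | cons _ => exact lt_irrefl _ hr
    | rel hr' => exact lt_asymm hr hr'

private lemma lex_of_sorted : ∀ {l1 l2 : List ℝ}, l1.Pairwise (· > ·) → l2.Pairwise (· > ·) →
    ∀ y : ℝ, y ∈ l2 → y ∉ l1 → (∀ z, y < z → (z ∈ l1 ↔ z ∈ l2)) →
    List.Lex (· < ·) l1 l2 := by
  intro l1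
  induction l1 with
  | nil =>
    rintro (_ | ⟨b, t2⟩) _ _ y hy2 hy1 hab
    · simp at hy2
    · exact List.Lex.nil
  | cons a t ih =>
    rintro (_ | ⟨b, t2⟩) h1 h2 y hy2 hy1 hab
    · simp at hy2
    · rcases lt_trichotomy a b with hlt | rfl | hgt
      · exact List.Lex.rel hlt
      · have hane : a ≠ y := fun h => hy1 (h ▸ (List.mem_cons_self (a := a) (l := t)))
        have hy2' : y ∈ t2 := by
          rcases List.mem_cons.mp hy2 with h | h
          · exact absurd h.symm hane
          · exact h
        refine List.Lex.cons (ih h1.of_cons h2.of_cons y hy2'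
          (fun h => hy1 (List.mem_cons_of_mem _ h)) ?_)
        intro z hz
        constructor
        · intro hzt
          have : z ∈ a :: t2 := (hab z hz).mp (List.mem_cons_of_mem _ hzt)
          rcases List.mem_cons.mp this with rfl | h
          · exact absurd (List.rel_of_pairwise_cons h1 hzt) (lt_irrefl z)
          · exact h
        · intro hzt
          have : z ∈ a :: t := (hab z hz).mpr (List.mem_cons_of_mem _ hzt)
          rcases List.mem_cons.mp this with rfl | h
          · exact absurd (List.rel_of_pairwise_cons h2 hzt) (lt_irrefl z)
          · exact h
      · exfalso
        have hyb : y ≤ b := by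
          rcases List.mem_cons.mp hy2 with rfl | h
          · exact le_refl y
          · exact le_of_lt (List.rel_of_pairwise_cons h2 h)
        have hya : y < a := lt_of_le_of_lt hyb hgt
        have ha2 : a ∈ b :: t2 := (hab a hya).mp ((List.mem_cons_self (a := a) (l := t)))
        rcases List.mem_cons.mp ha2 with rfl | h
        · exact lt_irrefl a hgt
        · exact lt_asymm hgt (List.rel_of_pairwise_cons h2 h)

private lemma descList_sorted {V : Type*} [DecidableEq V] (f0 : V → ℝ) (s : Finset V) :
    (descList f0 s).Pairwise (· > ·) := by
  rw [descList, List.pairwise_reverse]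
  exact (Finset.sortedLT_sort _).pairwise

private lemma mem_descList {V : Type*} [DecidableEq V] {f0 : V → ℝ} {s : Finset V} {x : ℝ} :
    x ∈ descList f0 s ↔ x ∈ s.image f0 := by
  rw [descList, List.mem_reverse, Finset.mem_sort]

private lemma lexLt_insert {V : Type*} [DecidableEq V] (f0 : V → ℝ) (A : Finset V) (m m' : V)
    (hvals : ∀ a ∈ A, f0 m' ≠ f0 a) (hmm : f0 m < f0 m') :
    lexLt f0 (insert m A) (insert m' A) := by
  apply lex_of_sorted (descList_sorted f0 _) (descList_sorted f0 _) (f0 m')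
  · rw [mem_descList, Finset.mem_image]
    exact ⟨m', Finset.mem_insert_self _ _, rfl⟩
  · rw [mem_descList, Finset.mem_image]
    rintro ⟨a, ha, hfa⟩
    rcases Finset.mem_insert.mp ha with rfl | ha
    · exact absurd hfa (ne_of_lt hmm)
    · exact hvals a ha hfa.symm
  · intro z hz
    simp only [mem_descList, Finset.mem_image]
    constructor
    · rintro ⟨a, ha, rfl⟩
      rcases Finset.mem_insert.mp ha with rfl | ha
      · exact absurd (hmm.trans hz) (lt_irrefl _)
      · exact ⟨a, Finset.mem_insert_of_mem ha, rfl⟩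
    · rintro ⟨a, ha, rfl⟩
      rcases Finset.mem_insert.mp ha with rfl | ha
      · exact absurd hz (lt_irrefl _)
      · exact ⟨a, Finset.mem_insert_of_mem ha, rfl⟩

private lemma rchild_isRChild {V : Type*} [DecidableEq V] {K : Finset (Finset V)} {f0 : V → ℝ}
    {σ : Finset V} (h : ∃ τ, IsRChild K f0 σ τ) : IsRChild K f0 σ (rchild K f0 σ) := by
  rw [rchild, dif_pos h]; exact h.choose_spec

private lemma exists_insert_of_codim_one {V : Type*} [DecidableEq V] {τ σ : Finset V}
    (hsub : τ ⊂ σ) (hcard : τ.card + 1 = σ.card) :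
    ∃ m, m ∈ σ ∧ m ∉ τ ∧ σ = insert m τ ∧ τ = σ.erase m := by
  have hss := hsub.subset
  have hc : (σ \ τ).card = 1 := by
    rw [Finset.card_sdiff_of_subset hss]
    have := Finset.card_le_card hss
    omega
  obtain ⟨m, hm⟩ := Finset.card_eq_one.mp hc
  have hmd : m ∈ σ \ τ := hm ▸ Finset.mem_singleton_self m
  have hmσ : m ∈ σ := (Finset.mem_sdiff.mp hmd).1
  have hmτ : m ∉ τ := (Finset.mem_sdiff.mp hmd).2
  have hσeq : σ = insert m τ := by
    ext x
    constructor
    · intro hx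
      by_cases hxt : x ∈ τ
      · exact Finset.mem_insert_of_mem hxt
      · have : x ∈ σ \ τ := Finset.mem_sdiff.mpr ⟨hx, hxt⟩
        rw [hm, Finset.mem_singleton] at this
        exact this ▸ Finset.mem_insert_self m τ
    · intro hx
      rcases Finset.mem_insert.mp hx with rfl | hx
      · exact hmσ
      · exact hss hx
  refine ⟨m, hmσ, hmτ, hσeq, ?_⟩
  rw [hσeq, Finset.erase_insert hmτ]

theorem stmt_6 {V : Type*} [DecidableEq V] (K : Finset (Finset V)) (f0 : V → ℝ)
    (hK : IsComplex K) (hinj : Set.InjOn f0 {v : V | {v} ∈ K})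
    (σ : Finset V) (hσ : σ ∈ K) (h : LeftRightParent K f0 σ) :
    ¬ LeftRightParent K f0 (rchild K f0 σ) := by
  intro h'
  obtain ⟨hex, hLP⟩ := h
  set τ := rchild K f0 σ with hτdef
  have hRC : IsRChild K f0 σ τ := rchild_isRChild hex
  obtain ⟨hex', hLP'⟩ := h'
  set ρ := rchild K f0 τ with hρdef
  have hRC' : IsRChild K f0 τ ρ := rchild_isRChild hex'
  obtain ⟨hτK, hτσ, hτc, hτmax⟩ := hRC
  obtain ⟨hρK, hρτ, hρc, hρmax⟩ := hRC'
  obtain ⟨m, hmσ, hmτ, hσeq, hτeq⟩ := exists_insert_of_codim_one hτσ hτc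
  obtain ⟨m', hm'τ, hm'ρ, hτeq', hρeq⟩ := exists_insert_of_codim_one hρτ hρc
  have hvert : ∀ x ∈ σ, {x} ∈ K := fun x hx =>
    hK.2 σ hσ {x} (Finset.singleton_subset_iff.mpr hx) ⟨x, Finset.mem_singleton_self x⟩
  have hinjσ : ∀ x ∈ σ, ∀ y ∈ σ, f0 x = f0 y → x = y := fun x hx y hy hxy =>
    hinj (hvert x hx) (hvert y hy) hxy
  have hτσs : τ ⊆ σ := hτσ.subset
  have hρσ : ρ ⊆ σ := hρτ.subset.trans hτσs
  have hm'σ : m' ∈ σ := hτσs hm'τ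
  have hmm' : m ≠ m' := fun hq => hmτ (hq ▸ hm'τ)
  have hτpos : 0 < τ.card := Finset.card_pos.mpr ⟨m', hm'τ⟩
  -- Step A : f0 m < f0 m'
  have hstepA : f0 m < f0 m' := by
    set B := (σ.erase m).erase m' with hB
    have hBσ : B ⊆ σ := (Finset.erase_subset _ _).trans (Finset.erase_subset _ _)
    have hmB : m ∉ B := fun hq => Finset.notMem_erase m σ (Finset.erase_subset _ _ hq)
    have hm'B : m' ∉ B := Finset.notMem_erase _ _
    have h1 : insert m' B = σ.erase m :=
      Finset.insert_erase (Finset.mem_erase.mpr ⟨hmm'.symm, hm'σ⟩)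
    have h2 : insert m B = σ.erase m' := by
      rw [hB, Finset.erase_right_comm]
      exact Finset.insert_erase (Finset.mem_erase.mpr ⟨hmm', hmσ⟩)
    have hτ'K : σ.erase m' ∈ K := by
      refine hK.2 σ hσ _ (Finset.erase_subset _ _) ?_
      rw [← Finset.card_pos, Finset.card_erase_of_mem hm'σ]
      omega
    have hτ'ss : σ.erase m' ⊂ σ := Finset.erase_ssubset hm'σ
    have hτ'c : (σ.erase m').card + 1 = σ.card := by
      rw [Finset.card_erase_of_mem hm'σ]; omega
    rcases hτmax _ hτ'K hτ'ss hτ'c with heq | hlex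
    · exfalso
      have : m ∈ σ.erase m' := Finset.mem_erase.mpr ⟨hmm', hmσ⟩
      rw [heq] at this
      exact hmτ this
    · rw [hτeq, ← h1, ← h2] at hlex
      rcases lt_trichotomy (f0 m) (f0 m') with hq | hq | hq
      · exact hq
      · exact absurd (hinjσ m hmσ m' hm'σ hq) hmm'
      · exfalso
        have hrev : lexLt f0 (insert m' B) (insert m B) := by
          refine lexLt_insert f0 B m' m (fun a ha hfe => ?_) hq
          exact hmB ((hinjσ m hmσ a (hBσ ha) hfe) ▸ ha)
        exact lex_asymm hrev hlex
  -- Step B : contradiction with IsLParent of ρ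
  have hmρ : m ∉ ρ := fun hq => hmτ (hρτ.subset hq)
  have hσ''K : insert m ρ ∈ K :=
    hK.2 σ hσ _ (Finset.insert_subset hmσ hρσ) (Finset.insert_nonempty _ _)
  have hσ''ss : ρ ⊂ insert m ρ := Finset.ssubset_insert hmρ
  have hσ''c : ρ.card + 1 = (insert m ρ).card := by
    rw [Finset.card_insert_of_notMem hmρ]
  rcases hLP'.2.2.2 _ hσ''K hσ''ss hσ''c with heq | hlex2
  · have : m ∈ τ := heq ▸ Finset.mem_insert_self m ρ
    exact hmτ this
  · rw [hτeq'] at hlex2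
    have hfwd : lexLt f0 (insert m ρ) (insert m' ρ) := by
      refine lexLt_insert f0 ρ m m' (fun a ha hfe => ?_) hstepA
      exact hm'ρ ((hinjσ m' hm'σ a (hρσ ha) hfe) ▸ ha)
    exact lex_asymm hfwd hlex2
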